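/- Let ℓ ≥ 1 and let v₁, …, v_ℓ be positive integers such that v₁ + ⋯ + v_i < v_{i+1}/2 for every 1 ≤ i ≤ ℓ − 2 and, if ℓ ≥ 2, v₁ + ⋯ + v_{ℓ−1} < v_ℓ − v_{ℓ−1}. Then the sumset V = {0, v₁} + ⋯ + {0, v_ℓ} has a unique factorization into atoms of P_fin,0(ℕ): each {0, v_i} is an atom, and whenever V = A₁ + ⋯ + A_k with each A_j an atom of P_fin,0(ℕ), one has k = ℓ and the multiset {A₁, …, A_k} equals the multiset {{0, v₁}, …, {0, v_ℓ}}. -/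

import Mathlib

open Pointwise

/-- `A` is an atom of the restricted power monoid `P_fin,0(ℕ)` of finite subsets of `ℕ`
containing `0`, under set addition. -/
def IsAtom0 (A : Finset ℕ) : Prop :=
  0 ∈ A ∧ A ≠ {0} ∧
    ∀ X Y : Finset ℕ, 0 ∈ X → 0 ∈ Y → A = X + Y → X = {0} ∨ Y = {0}


private def Qs (v : ℕ → ℕ) (S : Finset ℕ) : Finset ℕ := ∑ i ∈ S, ({0, v i} : Finset ℕ)

private lemma zero_memQ (v : ℕ → ℕ) (S : Finset ℕ) : 0 ∈ Qs v S := by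
  classical
  induction S using Finset.cons_induction with
  | empty => simp [Qs]
  | cons a s ha ih =>
    rw [Qs, Finset.sum_cons]
    exact Finset.add_mem_add (by simp) ih

private lemma memQ_le (v : ℕ → ℕ) (S : Finset ℕ) : ∀ x ∈ Qs v S, x ≤ ∑ i ∈ S, v i := by
  classical
  induction S using Finset.cons_induction with
  | empty => simp [Qs]
  | cons a s ha ih =>
    intro x hx
    rw [Qs, Finset.sum_cons] at hx
    rw [Finset.sum_cons]
    obtain ⟨b, hb, c, hc, rfl⟩ := Finset.mem_add.1 hx
    have hb' : b ≤ v a := by rcases Finset.mem_insert.1 hb with h | h <;> simp_all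
    exact Nat.add_le_add hb' (ih c hc)

private lemma sigma_memQ (v : ℕ → ℕ) (S : Finset ℕ) : (∑ i ∈ S, v i) ∈ Qs v S := by
  classical
  induction S using Finset.cons_induction with
  | empty => simp [Qs]
  | cons a s ha ih =>
    rw [Qs, Finset.sum_cons, Finset.sum_cons]
    exact Finset.add_mem_add (by simp) ih

private lemma Q_erase_add (v : ℕ → ℕ) {S : Finset ℕ} {i : ℕ} (hi : i ∈ S) :
    Qs v S = Qs v (S.erase i) + ({0, v i} : Finset ℕ) := by
  rw [Qs, Qs, ← Finset.add_sum_erase S _ hi, add_comm]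

private lemma single_memQ (v : ℕ → ℕ) {S : Finset ℕ} {i : ℕ} (hi : i ∈ S) : v i ∈ Qs v S := by
  rw [Q_erase_add v hi]
  have : (0 : ℕ) + v i ∈ Qs v (S.erase i) + ({0, v i} : Finset ℕ) :=
    Finset.add_mem_add (zero_memQ v _) (by simp)
  simpa using this

private lemma mem_add01 {A : Finset ℕ} {t z : ℕ} :
    z ∈ A + ({0, t} : Finset ℕ) ↔ z ∈ A ∨ ∃ w ∈ A, z = w + t := by
  constructor
  · rintro h
    obtain ⟨a, ha, b, hb, rfl⟩ := Finset.mem_add.1 h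
    rcases Finset.mem_insert.1 hb with rfl | hb
    · exact Or.inl (by simpa using ha)
    · exact Or.inr ⟨a, ha, by simp_all⟩
  · rintro (h | ⟨w, hw, rfl⟩)
    · exact Finset.mem_add.2 ⟨z, h, 0, by simp, by simp⟩
    · exact Finset.mem_add.2 ⟨w, hw, t, by simp, rfl⟩

private lemma subset_addright {X Y : Finset ℕ} (h0 : 0 ∈ Y) : X ⊆ X + Y := by
  intro x hx
  have : x + 0 ∈ X + Y := Finset.add_mem_add hx h0
  simpa using this

private lemma zero_mem_listsum {l : List (Finset ℕ)} (h : ∀ A ∈ l, 0 ∈ A) : 0 ∈ l.sum := by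
  induction l with
  | nil => simp
  | cons A l ih =>
    rw [List.sum_cons]
    have : (0 : ℕ) + 0 ∈ A + l.sum :=
      Finset.add_mem_add (h A (by simp)) (ih fun B hB => h B (by simp [hB]))
    simpa using this

section
variable {ℓ : ℕ} {v : ℕ → ℕ}

private lemma hstep (hℓ : 1 ≤ ℓ)
    (hpos : ∀ i, 1 ≤ i → i ≤ ℓ → 0 < v i)
    (hgrow : ∀ i, 1 ≤ i → i ≤ ℓ - 2 → 2 * (∑ j ∈ Finset.Icc 1 i, v j) < v (i + 1))
    (hlast : 2 ≤ ℓ → (∑ j ∈ Finset.Icc 1 (ℓ - 1), v j) + v (ℓ - 1) < v ℓ) :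
    ∀ m, 2 ≤ m → m ≤ ℓ → (∑ j ∈ Finset.Icc 1 (m - 1), v j) + v (m - 1) < v m := by
  intro m hm2 hmℓ
  rcases eq_or_lt_of_le hmℓ with rfl | hlt
  · exact hlast hm2
  · have h1 : 1 ≤ m - 1 := by omega
    have h2 : m - 1 ≤ ℓ - 2 := by omega
    have := hgrow (m - 1) h1 h2
    have hv : v (m - 1) ≤ ∑ j ∈ Finset.Icc 1 (m - 1), v j :=
      Finset.single_le_sum (fun i _ => Nat.zero_le _) (by simp [Finset.mem_Icc]; omega)
    have hm1 : m - 1 + 1 = m := by omega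
    rw [hm1] at this
    omega

private lemma sinc (hℓ : 1 ≤ ℓ)
    (hpos : ∀ i, 1 ≤ i → i ≤ ℓ → 0 < v i)
    (hgrow : ∀ i, 1 ≤ i → i ≤ ℓ - 2 → 2 * (∑ j ∈ Finset.Icc 1 i, v j) < v (i + 1))
    (hlast : 2 ≤ ℓ → (∑ j ∈ Finset.Icc 1 (ℓ - 1), v j) + v (ℓ - 1) < v ℓ) :
    ∀ m, 1 ≤ m → m ≤ ℓ → (∑ j ∈ Finset.Icc 1 (m - 1), v j) < v m := by
  intro m hm1 hmℓ
  rcases eq_or_lt_of_le hm1 with rfl | hm2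
  · simpa using hpos 1 le_rfl hℓ
  · have := hstep hℓ hpos hgrow hlast m (by omega) hmℓ
    omega

private lemma vmono (hℓ : 1 ≤ ℓ)
    (hpos : ∀ i, 1 ≤ i → i ≤ ℓ → 0 < v i)
    (hgrow : ∀ i, 1 ≤ i → i ≤ ℓ - 2 → 2 * (∑ j ∈ Finset.Icc 1 i, v j) < v (i + 1))
    (hlast : 2 ≤ ℓ → (∑ j ∈ Finset.Icc 1 (ℓ - 1), v j) + v (ℓ - 1) < v ℓ) :
    ∀ i j, 1 ≤ i → i ≤ j → j ≤ ℓ → v i ≤ v j := by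
  intro i j hi hij hjℓ
  rcases eq_or_lt_of_le hij with rfl | hlt
  · exact le_rfl
  · have hsub : v i ≤ ∑ k ∈ Finset.Icc 1 (j - 1), v k :=
      Finset.single_le_sum (fun k _ => Nat.zero_le _) (by simp [Finset.mem_Icc]; omega)
    have := sinc hℓ hpos hgrow hlast j (by omega) hjℓ
    omega

/-- subset sums over Icc 1 n are injective -/
private lemma sum_inj (hℓ : 1 ≤ ℓ)
    (hpos : ∀ i, 1 ≤ i → i ≤ ℓ → 0 < v i)
    (hgrow : ∀ i, 1 ≤ i → i ≤ ℓ - 2 → 2 * (∑ j ∈ Finset.Icc 1 i, v j) < v (i + 1))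
    (hlast : 2 ≤ ℓ → (∑ j ∈ Finset.Icc 1 (ℓ - 1), v j) + v (ℓ - 1) < v ℓ) :
    ∀ n, n ≤ ℓ → ∀ S T : Finset ℕ, S ⊆ Finset.Icc 1 n → T ⊆ Finset.Icc 1 n →
      (∑ i ∈ S, v i) = (∑ i ∈ T, v i) → S = T := by
  intro n
  induction n with
  | zero =>
    intro _ S T hS hT _
    have : Finset.Icc 1 0 = (∅ : Finset ℕ) := by simp
    rw [this] at hS hT
    rw [Finset.subset_empty] at hS hT
    rw [hS, hT]
  | succ n ih =>
    intro hnℓ S T hS hT hsum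
    have hnℓ' : n ≤ ℓ := by omega
    by_cases hS1 : n + 1 ∈ S <;> by_cases hT1 : n + 1 ∈ T
    · have hS' : S.erase (n+1) ⊆ Finset.Icc 1 n := by
        intro x hx
        have := hS (Finset.mem_of_mem_erase hx)
        have hne := Finset.ne_of_mem_erase hx
        simp only [Finset.mem_Icc] at this ⊢; omega
      have hT' : T.erase (n+1) ⊆ Finset.Icc 1 n := by
        intro x hx
        have := hT (Finset.mem_of_mem_erase hx)
        have hne := Finset.ne_of_mem_erase hx
        simp only [Finset.mem_Icc] at this ⊢; omega
      have e1 := Finset.add_sum_erase S v hS1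
      have e2 := Finset.add_sum_erase T v hT1
      have : (∑ i ∈ S.erase (n+1), v i) = ∑ i ∈ T.erase (n+1), v i := by omega
      have := ih hnℓ' _ _ hS' hT' this
      rw [← Finset.insert_erase hS1, ← Finset.insert_erase hT1, this]
    · exfalso
      have h1 : v (n+1) ≤ ∑ i ∈ S, v i :=
        Finset.single_le_sum (fun k _ => Nat.zero_le _) hS1
      have h2 : (∑ i ∈ T, v i) ≤ ∑ j ∈ Finset.Icc 1 n, v j :=
        Finset.sum_le_sum_of_subset (by
          intro x hx
          have := hT hx
          simp only [Finset.mem_Icc] at this ⊢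
          rcases eq_or_lt_of_le this.2 with h | h
          · exact absurd (h ▸ hx) hT1
          · omega)
      have h3 := sinc hℓ hpos hgrow hlast (n+1) (by omega) (by omega)
      simp only [Nat.add_sub_cancel] at h3
      omega
    · exfalso
      have h1 : v (n+1) ≤ ∑ i ∈ T, v i :=
        Finset.single_le_sum (fun k _ => Nat.zero_le _) hT1
      have h2 : (∑ i ∈ S, v i) ≤ ∑ j ∈ Finset.Icc 1 n, v j :=
        Finset.sum_le_sum_of_subset (by
          intro x hx
          have := hS hx
          simp only [Finset.mem_Icc] at this ⊢
          rcases eq_or_lt_of_le this.2 with h | h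
          · exact absurd (h ▸ hx) hS1
          · omega)
      have h3 := sinc hℓ hpos hgrow hlast (n+1) (by omega) (by omega)
      simp only [Nat.add_sub_cancel] at h3
      omega
    · refine ih hnℓ' S T ?_ ?_ hsum
      · intro x hx
        have := hS hx
        simp only [Finset.mem_Icc] at this ⊢
        rcases eq_or_lt_of_le this.2 with h | h
        · exact absurd (h ▸ hx) hS1
        · omega
      · intro x hx
        have := hT hx
        simp only [Finset.mem_Icc] at this ⊢
        rcases eq_or_lt_of_le this.2 with h | h
        · exact absurd (h ▸ hx) hT1
        · omega

end

section
variable {ℓ : ℕ} {v : ℕ → ℕ}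

private lemma subset_addleft {X Y : Finset ℕ} (h0 : 0 ∈ X) : Y ⊆ X + Y := by
  intro y hy
  have : 0 + y ∈ X + Y := Finset.add_mem_add h0 hy
  simpa using this

private lemma key (hℓ : 1 ≤ ℓ)
    (hpos : ∀ i, 1 ≤ i → i ≤ ℓ → 0 < v i)
    (hgrow : ∀ i, 1 ≤ i → i ≤ ℓ - 2 → 2 * (∑ j ∈ Finset.Icc 1 i, v j) < v (i + 1))
    (hlast : 2 ≤ ℓ → (∑ j ∈ Finset.Icc 1 (ℓ - 1), v j) + v (ℓ - 1) < v ℓ) :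
    ∀ S : Finset ℕ, S ⊆ Finset.Icc 1 ℓ → ∀ X Y : Finset ℕ, 0 ∈ X → 0 ∈ Y →
      X + Y = Qs v S → ∃ T ⊆ S, X = Qs v T ∧ Y = Qs v (S \ T) := by
  classical
  intro S
  induction S using Finset.strongInduction with
  | _ S IH =>
  intro hSIcc X Y hX0 hY0 hXY
  rcases Finset.eq_empty_or_nonempty S with rfl | hSne
  · -- S = ∅ : Qs = {0}
    have hQ : Qs v (∅ : Finset ℕ) = {0} := by simp [Qs]; rfl
    rw [hQ] at hXY
    have hXsub : X ⊆ ({0} : Finset ℕ) := hXY ▸ subset_addright hY0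
    have hYsub : Y ⊆ ({0} : Finset ℕ) := hXY ▸ subset_addleft hX0
    have hXeq : X = ({0} : Finset ℕ) :=
      Finset.Subset.antisymm hXsub (Finset.singleton_subset_iff.2 hX0)
    have hYeq : Y = ({0} : Finset ℕ) :=
      Finset.Subset.antisymm hYsub (Finset.singleton_subset_iff.2 hY0)
    exact ⟨∅, by simp, by rw [hXeq, hQ], by simpa [hYeq] using hQ.symm⟩
  -- S nonempty
  set m := S.max' hSne with hm_def
  have hmS : m ∈ S := S.max'_mem hSne
  have hmIcc := hSIcc hmS
  rw [Finset.mem_Icc] at hmIcc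
  set t := v m with ht_def
  have htpos : 0 < t := hpos m hmIcc.1 hmIcc.2
  set S' := S.erase m with hS'_def
  have hS'ss : S' ⊂ S := Finset.erase_ssubset hmS
  have hS'Icc : S' ⊆ Finset.Icc 1 ℓ := fun x hx => hSIcc (Finset.mem_of_mem_erase hx)
  set σ' := ∑ i ∈ S', v i with hσ'_def
  have hQsplit : Qs v S = Qs v S' + ({0, t} : Finset ℕ) := Q_erase_add v hmS
  have hsigmaS : (∑ i ∈ S, v i) = σ' + t := by
    have h := Finset.add_sum_erase S v hmS
    rw [← hS'_def, ← hσ'_def, ← ht_def] at h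
    omega
  have gap : ∀ z ∈ Qs v S, z ∈ Qs v S' ∨ ∃ w ∈ Qs v S', z = w + t := by
    intro z hz
    rw [hQsplit] at hz
    exact mem_add01.1 hz
  have hwle : ∀ w ∈ Qs v S', w ≤ σ' := memQ_le v S'
  rcases Finset.eq_empty_or_nonempty S' with hS'e | hS'ne
  · -- S = {m} : atom-like argument
    have hSm : S = {m} := by
      apply Finset.Subset.antisymm
      · intro j hj
        by_cases hjm : j = m
        · simp [hjm]
        · exact absurd (Finset.mem_erase.2 ⟨hjm, hj⟩) (by rw [← hS'_def, hS'e]; simp)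
      · simpa using hmS
    have hQm : Qs v S = ({0, t} : Finset ℕ) := by
      rw [hSm, Qs, Finset.sum_singleton]
    rw [hQm] at hXY
    have hXsub : X ⊆ ({0, t} : Finset ℕ) := hXY ▸ subset_addright hY0
    have hYsub : Y ⊆ ({0, t} : Finset ℕ) := hXY ▸ subset_addleft hX0
    by_cases htX : t ∈ X
    · have htY : t ∉ Y := by
        intro htY
        have : t + t ∈ ({0, t} : Finset ℕ) := hXY ▸ Finset.add_mem_add htX htY
        rcases Finset.mem_insert.1 this with h | h
        · omega
        · rw [Finset.mem_singleton] at h; omega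
      have hYeq : Y = ({0} : Finset ℕ) := by
        apply Finset.Subset.antisymm
        · intro y hy
          rcases Finset.mem_insert.1 (hYsub hy) with h | h
          · simpa [h]
          · rw [Finset.mem_singleton] at h; exact absurd (h ▸ hy) htY
        · exact Finset.singleton_subset_iff.2 hY0
      have hXeq : X = Qs v S := by
        have : X + Y = X := by rw [hYeq]; exact add_zero X
        rw [← this, hXY, hQm]
      exact ⟨S, le_refl _, hXeq, by simp [hYeq, Qs]; rfl⟩
    · have hXeq : X = ({0} : Finset ℕ) := by
        apply Finset.Subset.antisymm
        · intro x hx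
          rcases Finset.mem_insert.1 (hXsub hx) with h | h
          · simpa [h]
          · rw [Finset.mem_singleton] at h; exact absurd (h ▸ hx) htX
        · exact Finset.singleton_subset_iff.2 hX0
      have hYeq : Y = Qs v S := by
        have : X + Y = Y := by rw [hXeq]; exact zero_add Y
        rw [← this, hXY, hQm]
      exact ⟨∅, by simp, by rw [hXeq]; simp [Qs]; rfl, by simpa using hYeq⟩
  -- S' nonempty : main inductive case
  replace hwle : ∀ w ∈ Qs v S', w ≤ σ' := by
    intro w hw; have := memQ_le v S' w hw; omega
  set m' := S'.max' hS'ne with hm'_def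
  have hm'S' : m' ∈ S' := S'.max'_mem hS'ne
  have hm'S : m' ∈ S := Finset.mem_of_mem_erase hm'S'
  have hm'ne : m' ≠ m := Finset.ne_of_mem_erase hm'S'
  have hm'lt : m' < m := lt_of_le_of_ne (S.le_max' m' hm'S) hm'ne
  have hm'Icc := hSIcc hm'S
  rw [Finset.mem_Icc] at hm'Icc
  set t' := v m' with ht'_def
  have ht'pos : 0 < t' := hpos m' hm'Icc.1 hm'Icc.2
  set S'' := S'.erase m' with hS''_def
  set σ'' := ∑ i ∈ S'', v i with hσ''_def
  have hσ'split : σ' = σ'' + t' := by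
    have h := Finset.add_sum_erase S' v hm'S'
    rw [← hS''_def, ← hσ''_def, ← ht'_def, ← hσ'_def] at h
    omega
  have hQ'split : Qs v S' = Qs v S'' + ({0, t'} : Finset ℕ) := by
    have h := Q_erase_add v hm'S'
    rw [← hS''_def, ← ht'_def] at h
    exact h
  have hw''le : ∀ w ∈ Qs v S'', w ≤ σ'' := by
    intro w hw; have := memQ_le v S'' w hw; omega
  have hS'Iccm : S' ⊆ Finset.Icc 1 (m - 1) := by
    intro x hx
    have h1 := hSIcc (Finset.mem_of_mem_erase hx)
    have h2 := Finset.ne_of_mem_erase hx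
    have h3 := S.le_max' x (Finset.mem_of_mem_erase hx)
    rw [Finset.mem_Icc] at h1 ⊢
    omega
  have I1 : σ' + t' < t := by
    have hσ'le : σ' ≤ ∑ j ∈ Finset.Icc 1 (m - 1), v j := by
      have := Finset.sum_le_sum_of_subset (f := v) hS'Iccm
      omega
    have ht'le : t' ≤ v (m - 1) :=
      vmono hℓ hpos hgrow hlast m' (m - 1) hm'Icc.1 (by omega) (by omega)
    have := hstep hℓ hpos hgrow hlast m (by omega) hmIcc.2
    rw [← ht_def] at this
    omega
  have I2 : 2 * σ'' < t' := by
    have hS''Icc : S'' ⊆ Finset.Icc 1 (m' - 1) := by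
      intro x hx
      have h1 := hSIcc (Finset.mem_of_mem_erase (Finset.mem_of_mem_erase hx))
      have h2 := Finset.ne_of_mem_erase hx
      have h3 := S'.le_max' x (Finset.mem_of_mem_erase hx)
      rw [Finset.mem_Icc] at h1 ⊢
      omega
    by_cases hm'1 : m' = 1
    · have hempty : S'' = ∅ := by
        rw [← Finset.subset_empty]
        intro x hx
        have := hS''Icc hx
        rw [hm'1] at this
        simpa using this
      have : σ'' = 0 := by rw [hσ''_def, hempty]; simp
      omega
    · have hg := hgrow (m' - 1) (by omega) (by omega)
      rw [show m' - 1 + 1 = m' by omega, ← ht'_def] at hg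
      have := Finset.sum_le_sum_of_subset (f := v) hS''Icc
      omega
  have Wstruct : ∀ w ∈ Qs v S', w ≤ σ'' ∨ (t' ≤ w ∧ w - t' ∈ Qs v S'') := by
    intro w hw
    rw [hQ'split] at hw
    rcases mem_add01.1 hw with h | ⟨u, hu, rfl⟩
    · exact Or.inl (hw''le w h)
    · refine Or.inr ⟨by omega, ?_⟩
      have : u + t' - t' = u := by omega
      rw [this]; exact hu
  have main : ∀ X Y : Finset ℕ, 0 ∈ X → 0 ∈ Y → X + Y = Qs v S →
      (∀ x ∈ X, x < t) → (∃ y ∈ Y, t ≤ y) →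
      ∃ T ⊆ S, X = Qs v T ∧ Y = Qs v (S \ T) := by
    clear hX0 hY0 hXY
    intro X Y hX0 hY0 hXY hXlow hYhigh
    have hXQ : ∀ x ∈ X, x ∈ Qs v S := by
      intro x hx; rw [← hXY]; exact subset_addright hY0 hx
    have hYQ : ∀ y ∈ Y, y ∈ Qs v S := by
      intro y hy; rw [← hXY]; exact subset_addleft hX0 hy
    have hXQ' : ∀ x ∈ X, x ∈ Qs v S' := by
      intro x hx
      rcases gap x (hXQ x hx) with h | ⟨w, hw, heq⟩
      · exact h
      · exfalso; have := hXlow x hx; omega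
    have hXle : ∀ x ∈ X, x ≤ σ' := fun x hx => hwle x (hXQ' x hx)
    set Y₁ := Y.filter (fun y => y < t) with hY₁_def
    set Y₂ := (Y.filter (fun y => t ≤ y)).image (fun y => y - t) with hY₂_def
    have hY₁sub : Y₁ ⊆ Y := Finset.filter_subset _ _
    have hY₂mem : ∀ z, z ∈ Y₂ ↔ ∃ y ∈ Y, t ≤ y ∧ y - t = z := by
      intro z
      rw [hY₂_def, Finset.mem_image]
      constructor
      · rintro ⟨y, hy, rfl⟩
        rw [Finset.mem_filter] at hy
        exact ⟨y, hy.1, hy.2, rfl⟩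
      · rintro ⟨y, hy, hty, rfl⟩
        exact ⟨y, Finset.mem_filter.2 ⟨hy, hty⟩, rfl⟩
    have hY₁Q : ∀ y ∈ Y₁, y ∈ Qs v S' := by
      intro y hy
      rw [hY₁_def, Finset.mem_filter] at hy
      rcases gap y (hYQ y hy.1) with h | ⟨w, hw, heq⟩
      · exact h
      · exfalso; omega
    have hY₁le : ∀ y ∈ Y₁, y ≤ σ' := fun y hy => hwle y (hY₁Q y hy)
    have hY₂Q : ∀ z ∈ Y₂, z ∈ Qs v S' ∧ z + t ∈ Y := by
      intro z hz
      rw [hY₂mem] at hz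
      obtain ⟨y, hyY, hty, rfl⟩ := hz
      rcases gap y (hYQ y hyY) with h | ⟨w, hw, rfl⟩
      · exfalso; have := hwle y h; omega
      · constructor
        · have : w + t - t = w := by omega
          rw [this]; exact hw
        · have : w + t - t + t = w + t := by omega
          rw [this]; exact hyY
    have overflow : ∀ x ∈ X, ∀ y ∈ Y₁, x + y ≤ σ' := by
      by_contra hcon
      push_neg at hcon
      obtain ⟨xb, hxbX, yb, hybY₁, hover⟩ := hcon
      have hxble := hXle xb hxbX
      have hyble := hY₁le yb hybY₁
      have hxbybQ : xb + yb ∈ Qs v S := by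
        rw [← hXY]; exact Finset.add_mem_add hxbX (hY₁sub hybY₁)
      have hge : t ≤ xb + yb := by
        rcases gap _ hxbybQ with h | ⟨w, hw, heq⟩
        · exfalso; have := hwle _ h; omega
        · omega
      have hxbt' : t' < xb := by omega
      have hybt' : t' < yb := by omega
      have hxbst : t' ≤ xb ∧ xb - t' ∈ Qs v S'' := by
        rcases Wstruct xb (hXQ' xb hxbX) with h | h
        · exfalso; omega
        · exact h
      have hybst : t' ≤ yb ∧ yb - t' ∈ Qs v S'' := by
        rcases Wstruct yb (hY₁Q yb hybY₁) with h | h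
        · exfalso; omega
        · exact h
      have hxb'le : xb - t' ≤ σ'' := hw''le _ hxbst.2
      have hyb'le : yb - t' ≤ σ'' := hw''le _ hybst.2
      have ht'X : t' ∈ X := by
        have ht'Q' : t' ∈ Qs v S' := by
          rw [ht'_def]; exact single_memQ v hm'S'
        have htt'Q : t + t' ∈ Qs v S := by
          rw [hQsplit]; exact mem_add01.2 (Or.inr ⟨t', ht'Q', by omega⟩)
        rw [← hXY] at htt'Q
        obtain ⟨x, hxX, y, hyY, hxy⟩ := Finset.mem_add.1 htt'Q
        by_cases hyt : y < t
        · exfalso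
          have hy₁ : y ∈ Y₁ := by rw [hY₁_def]; exact Finset.mem_filter.2 ⟨hyY, hyt⟩
          have h1 := hXle x hxX
          have h2 := hY₁le y hy₁
          omega
        · push_neg at hyt
          have hbd : xb + y ∈ Qs v S := by
            rw [← hXY]; exact Finset.add_mem_add hxbX hyY
          have hbd2 := memQ_le v S _ hbd
          have hxeq : x + (y - t) = t' := by omega
          have hxgt : σ'' < x := by omega
          rcases Wstruct x (hXQ' x hxX) with h | h
          · exfalso; omega
          · have hxt' : x = t' := by omega
            rw [← hxt']; exact hxX
      have hfin : t' + yb ∈ Qs v S := by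
        rw [← hXY]; exact Finset.add_mem_add ht'X (hY₁sub hybY₁)
      rcases gap _ hfin with h | ⟨w, hw, heq⟩
      · have := hwle _ h; omega
      · have := hwle _ hw; omega
    have hC1 : X + Y₁ = Qs v S' := by
      apply Finset.Subset.antisymm
      · intro z hz
        obtain ⟨x, hx, y, hy, rfl⟩ := Finset.mem_add.1 hz
        have h1 := overflow x hx y hy
        have hzQ : x + y ∈ Qs v S := by
          rw [← hXY]; exact Finset.add_mem_add hx (hY₁sub hy)
        rcases gap _ hzQ with h | ⟨w, hw, heq⟩
        · exact h
        · exfalso; omega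
      · intro w hw
        have hwQ : w ∈ Qs v S := by
          rw [hQsplit]; exact mem_add01.2 (Or.inl hw)
        rw [← hXY] at hwQ
        obtain ⟨x, hx, y, hy, hxy⟩ := Finset.mem_add.1 hwQ
        have hwle' := hwle w hw
        by_cases hyt : y < t
        · exact Finset.mem_add.2 ⟨x, hx, y, by rw [hY₁_def]; exact Finset.mem_filter.2 ⟨hy, hyt⟩, hxy⟩
        · exfalso; push_neg at hyt; omega
    have hC2 : X + Y₂ = Qs v S' := by
      apply Finset.Subset.antisymm
      · intro z hz
        obtain ⟨x, hx, y₂, hy₂, rfl⟩ := Finset.mem_add.1 hz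
        obtain ⟨hy₂Q, hyY⟩ := hY₂Q y₂ hy₂
        have hmem : x + (y₂ + t) ∈ Qs v S := by
          rw [← hXY]; exact Finset.add_mem_add hx hyY
        rcases gap _ hmem with h | ⟨w, hw, heq⟩
        · exfalso; have := hwle _ h; omega
        · have hxw : x + y₂ = w := by omega
          rw [hxw]; exact hw
      · intro w hw
        have hwtQ : w + t ∈ Qs v S := by
          rw [hQsplit]; exact mem_add01.2 (Or.inr ⟨w, hw, rfl⟩)
        rw [← hXY] at hwtQ
        obtain ⟨x, hx, y, hy, hxy⟩ := Finset.mem_add.1 hwtQ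
        by_cases hyt : y < t
        · exfalso
          have h1 := overflow x hx y (by rw [hY₁_def]; exact Finset.mem_filter.2 ⟨hy, hyt⟩)
          have h2 := hwle w hw
          omega
        · push_neg at hyt
          have hy₂ : y - t ∈ Y₂ := (hY₂mem _).2 ⟨y, hy, hyt, rfl⟩
          exact Finset.mem_add.2 ⟨x, hx, y - t, hy₂, by omega⟩
    have hY₂0 : 0 ∈ Y₂ := by
      have h0 : (0 : ℕ) ∈ Qs v S' := zero_memQ v S'
      rw [← hC2] at h0
      obtain ⟨x, hx, z, hz, hxz⟩ := Finset.mem_add.1 h0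
      have hz0 : z = 0 := by omega
      rwa [hz0] at hz
    have hY₁0 : 0 ∈ Y₁ := by
      rw [hY₁_def]; exact Finset.mem_filter.2 ⟨hY0, htpos⟩
    obtain ⟨T, hTsub, hXT, hY₁T⟩ := IH S' hS'ss hS'Icc X Y₁ hX0 hY₁0 hC1
    obtain ⟨T', hT'sub, hXT', hY₂T'⟩ := IH S' hS'ss hS'Icc X Y₂ hX0 hY₂0 hC2
    have hTT' : T = T' := by
      apply sum_inj hℓ hpos hgrow hlast ℓ le_rfl T T' (hTsub.trans hS'Icc) (hT'sub.trans hS'Icc)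
      have h1 : (∑ i ∈ T, v i) ∈ Qs v T' := by
        rw [← hXT', hXT]; exact sigma_memQ v T
      have h2 : (∑ i ∈ T', v i) ∈ Qs v T := by
        rw [← hXT, hXT']; exact sigma_memQ v T'
      have hb1 := memQ_le v T' _ h1
      have hb2 := memQ_le v T _ h2
      omega
    have hY₁Y₂ : Y₂ = Y₁ := by
      rw [hY₂T', ← hTT', ← hY₁T]
    have hmT : m ∉ T := fun h => (Finset.notMem_erase m S) (hTsub h)
    refine ⟨T, hTsub.trans (Finset.erase_subset m S), hXT, ?_⟩
    have hmnot : m ∉ S' \ T := fun h => (Finset.notMem_erase m S) (Finset.mem_sdiff.1 h).1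
    have hSdT : S \ T = insert m (S' \ T) := by
      ext j
      simp only [Finset.mem_sdiff, Finset.mem_insert, hS'_def, Finset.mem_erase]
      constructor
      · rintro ⟨hjS, hjT⟩
        by_cases hjm : j = m
        · exact Or.inl hjm
        · exact Or.inr ⟨⟨hjm, hjS⟩, hjT⟩
      · rintro (rfl | ⟨⟨hjm, hjS⟩, hjT⟩)
        · exact ⟨hmS, hmT⟩
        · exact ⟨hjS, hjT⟩
    have hQsdT : Qs v (S \ T) = Y₁ + ({0, t} : Finset ℕ) := by
      rw [hSdT]
      rw [show Qs v (insert m (S' \ T)) = ({0, v m} : Finset ℕ) + Qs v (S' \ T) from by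
        rw [Qs, Qs, Finset.sum_insert hmnot]]
      rw [← ht_def, ← hY₁T, add_comm]
    rw [hQsdT]
    apply Finset.Subset.antisymm
    · intro z hz
      by_cases hzt : z < t
      · exact mem_add01.2 (Or.inl (by rw [hY₁_def]; exact Finset.mem_filter.2 ⟨hz, hzt⟩))
      · push_neg at hzt
        have hz₂ : z - t ∈ Y₂ := (hY₂mem _).2 ⟨z, hz, hzt, rfl⟩
        rw [hY₁Y₂] at hz₂
        exact mem_add01.2 (Or.inr ⟨z - t, hz₂, by omega⟩)
    · intro z hz
      rcases mem_add01.1 hz with h | ⟨w, hw, rfl⟩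
      · exact hY₁sub h
      · rw [← hY₁Y₂] at hw
        exact (hY₂Q w hw).2
  -- case analysis on where the top element lives
  by_cases hXhigh : ∃ x ∈ X, t ≤ x
  · by_cases hYhigh : ∃ y ∈ Y, t ≤ y
    · exfalso
      obtain ⟨x, hx, hxt⟩ := hXhigh
      obtain ⟨y, hy, hyt⟩ := hYhigh
      have hmem : x + y ∈ Qs v S := by
        rw [← hXY]; exact Finset.add_mem_add hx hy
      have h1 := memQ_le v S _ hmem
      omega
    · push_neg at hYhigh
      have hYX : Y + X = Qs v S := by rw [add_comm]; exact hXY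
      obtain ⟨T, hTsub, hYT, hXT⟩ := main Y X hY0 hX0 hYX hYhigh hXhigh
      refine ⟨S \ T, Finset.sdiff_subset, hXT, ?_⟩
      rwa [Finset.sdiff_sdiff_eq_self hTsub]
  · push_neg at hXhigh
    by_cases hYhigh : ∃ y ∈ Y, t ≤ y
    · exact main X Y hX0 hY0 hXY hXhigh hYhigh
    · exfalso
      push_neg at hYhigh
      have hst : σ' + t ∈ Qs v S := by
        rw [← hsigmaS]; exact sigma_memQ v S
      rw [← hXY] at hst
      obtain ⟨x, hx, y, hy, hxy⟩ := Finset.mem_add.1 hst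
      have hx' : x ≤ σ' := by
        rcases gap x (by rw [← hXY]; exact subset_addright hY0 hx) with h | ⟨w, hw, heq⟩
        · exact hwle x h
        · exfalso; have := hXhigh x hx; omega
      have hy' : y ≤ σ' := by
        rcases gap y (by rw [← hXY]; exact subset_addleft hX0 hy) with h | ⟨w, hw, heq⟩
        · exact hwle y h
        · exfalso; have := hYhigh y hy; omega
      omega

end

private lemma icc_val_map (f : ℕ → Finset ℕ) :
    ∀ n, (Finset.Icc 1 n).val.map f = (Multiset.range n).map (fun i => f (i + 1)) := by
  intro n
  induction n with
  | zero => simp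
  | succ n ih =>
    rw [Multiset.range_succ, Multiset.map_cons, ← ih]
    have h1 : Finset.Icc 1 (n + 1) = insert (n + 1) (Finset.Icc 1 n) := by
      ext j; simp [Finset.mem_Icc]; omega
    have h2 : n + 1 ∉ Finset.Icc 1 n := by simp
    rw [h1, Finset.insert_val_of_notMem h2, Multiset.map_cons]

private lemma uniq {ℓ : ℕ} {v : ℕ → ℕ} (hℓ : 1 ≤ ℓ)
    (hpos : ∀ i, 1 ≤ i → i ≤ ℓ → 0 < v i)
    (hgrow : ∀ i, 1 ≤ i → i ≤ ℓ - 2 → 2 * (∑ j ∈ Finset.Icc 1 i, v j) < v (i + 1))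
    (hlast : 2 ≤ ℓ → (∑ j ∈ Finset.Icc 1 (ℓ - 1), v j) + v (ℓ - 1) < v ℓ) :
    ∀ l : List (Finset ℕ),
      (∀ A ∈ l, 0 ∈ A ∧ A ≠ {0} ∧
        ∀ X Y : Finset ℕ, 0 ∈ X → 0 ∈ Y → A = X + Y → X = {0} ∨ Y = {0}) →
      ∀ S : Finset ℕ, S ⊆ Finset.Icc 1 ℓ → l.sum = Qs v S →
      (↑l : Multiset (Finset ℕ)) = S.val.map (fun i => ({0, v i} : Finset ℕ)) := by
  intro l
  induction l with
  | nil =>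
    intro _ S hSIcc hsum
    have hS : S = ∅ := by
      rcases S.eq_empty_or_nonempty with rfl | ⟨i, hi⟩
      · rfl
      · exfalso
        have h1 := single_memQ v hi
        rw [← hsum] at h1
        simp only [List.sum_nil, Finset.mem_zero] at h1
        have h2 := Finset.mem_Icc.1 (hSIcc hi)
        have := hpos i h2.1 h2.2
        omega
    subst hS
    simp
  | cons A l ih =>
    intro hatoms S hSIcc hsum
    rw [List.sum_cons] at hsum
    have hA := hatoms A List.mem_cons_self
    have h0l : 0 ∈ l.sum := zero_mem_listsum (fun B hB => (hatoms B (List.mem_cons_of_mem A hB)).1)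
    obtain ⟨T, hTsub, hAT, hlT⟩ :=
      key hℓ hpos hgrow hlast S hSIcc A l.sum hA.1 h0l hsum
    obtain ⟨i, hiT⟩ : T.Nonempty := by
      rcases T.eq_empty_or_nonempty with rfl | h
      · exfalso
        apply hA.2.1
        rw [hAT]
        simp [Qs]; rfl
      · exact h
    have hiS : i ∈ S := hTsub hiT
    have hiIcc := Finset.mem_Icc.1 (hSIcc hiS)
    have hvipos : 0 < v i := hpos i hiIcc.1 hiIcc.2
    have hsplit : A = Qs v (T.erase i) + ({0, v i} : Finset ℕ) := by
      rw [hAT]; exact Q_erase_add v hiT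
    have hTi : T = {i} := by
      rcases hA.2.2 _ _ (zero_memQ v _) (by simp) hsplit with hX | hY
      · have hTe : T.erase i = ∅ := by
          rcases (T.erase i).eq_empty_or_nonempty with h | ⟨j, hj⟩
          · exact h
          · exfalso
            have hj' := single_memQ v hj
            rw [hX] at hj'
            have hjS : j ∈ S := hTsub (Finset.mem_of_mem_erase hj)
            have h2 := Finset.mem_Icc.1 (hSIcc hjS)
            have := hpos j h2.1 h2.2
            simp only [Finset.mem_singleton] at hj'
            omega
        rw [← Finset.insert_erase hiT, hTe]
        rfl
      · exfalso
        have : v i ∈ ({0} : Finset ℕ) := hY ▸ (by simp : v i ∈ ({0, v i} : Finset ℕ))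
        simp only [Finset.mem_singleton] at this
        omega
    have hAeq : A = ({0, v i} : Finset ℕ) := by
      rw [hAT, hTi, Qs, Finset.sum_singleton]
    have hl' : l.sum = Qs v (S.erase i) := by
      rw [hlT, hTi, ← Finset.erase_eq]
    have hIH := ih (fun B hB => hatoms B (List.mem_cons_of_mem A hB)) (S.erase i)
      (fun x hx => hSIcc (Finset.mem_of_mem_erase hx)) hl'
    have hSval : S.val = i ::ₘ (S.erase i).val := by
      rw [Finset.erase_val, Multiset.cons_erase (show i ∈ S.val from hiS)]
    rw [hSval, Multiset.map_cons, ← Multiset.cons_coe, hIH, hAeq]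

/-- Let `v₁, …, v_ℓ` be positive integers with `v₁ + ⋯ + v_i < v_{i+1}/2` for
`1 ≤ i ≤ ℓ - 2` and (if `ℓ ≥ 2`) `v₁ + ⋯ + v_{ℓ-1} < v_ℓ - v_{ℓ-1}`. Then each
`{0, v_i}` is an atom of `P_fin,0(ℕ)` and the sumset `{0, v₁} + ⋯ + {0, v_ℓ}` has a
unique factorization into atoms of `P_fin,0(ℕ)`: any list of atoms summing to it is a
permutation of `{0, v₁}, …, {0, v_ℓ}`. -/
theorem stmt_16 (ℓ : ℕ) (hℓ : 1 ≤ ℓ) (v : ℕ → ℕ)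
    (hpos : ∀ i, 1 ≤ i → i ≤ ℓ → 0 < v i)
    (hgrow : ∀ i, 1 ≤ i → i ≤ ℓ - 2 → 2 * (∑ j ∈ Finset.Icc 1 i, v j) < v (i + 1))
    (hlast : 2 ≤ ℓ → (∑ j ∈ Finset.Icc 1 (ℓ - 1), v j) + v (ℓ - 1) < v ℓ) :
    (∀ i, 1 ≤ i → i ≤ ℓ → IsAtom0 ({0, v i} : Finset ℕ)) ∧
    ∀ l : List (Finset ℕ), (∀ A ∈ l, IsAtom0 A) →
      l.sum = ∑ i ∈ Finset.Icc 1 ℓ, ({0, v i} : Finset ℕ) →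
      l.Perm ((List.range ℓ).map fun i => ({0, v (i + 1)} : Finset ℕ)) := by
  constructor
  · intro i hi1 hiℓ
    have hvi : 0 < v i := hpos i hi1 hiℓ
    refine ⟨by simp, ?_, ?_⟩
    · intro h
      have : v i ∈ ({0} : Finset ℕ) := h ▸ (by simp : v i ∈ ({0, v i} : Finset ℕ))
      simp only [Finset.mem_singleton] at this
      omega
    · intro X Y hX0 hY0 hXY
      have hXsub : X ⊆ ({0, v i} : Finset ℕ) := by rw [hXY]; exact subset_addright hY0
      have hYsub : Y ⊆ ({0, v i} : Finset ℕ) := by rw [hXY]; exact subset_addleft hX0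
      by_cases htX : v i ∈ X
      · right
        have htY : v i ∉ Y := by
          intro htY
          have hmem : v i + v i ∈ ({0, v i} : Finset ℕ) := by
            rw [hXY]; exact Finset.add_mem_add htX htY
          rcases Finset.mem_insert.1 hmem with h | h
          · omega
          · rw [Finset.mem_singleton] at h; omega
        apply Finset.Subset.antisymm
        · intro y hy
          rcases Finset.mem_insert.1 (hYsub hy) with h | h
          · simp [h]
          · rw [Finset.mem_singleton] at h; exact absurd (h ▸ hy) htY
        · exact Finset.singleton_subset_iff.2 hY0
      · left
        apply Finset.Subset.antisymm
        · intro x hx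
          rcases Finset.mem_insert.1 (hXsub hx) with h | h
          · simp [h]
          · rw [Finset.mem_singleton] at h; exact absurd (h ▸ hx) htX
        · exact Finset.singleton_subset_iff.2 hX0
  · intro l hl hsum
    have hmain := uniq hℓ hpos hgrow hlast l (fun A hA => hl A hA) (Finset.Icc 1 ℓ)
      Finset.Subset.rfl (by rw [hsum]; rfl)
    refine Multiset.coe_eq_coe.1 ?_
    rw [hmain, icc_val_map]
    rfl
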